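/- Let r, R > 0, let c ∈ ℍ, and let s be a finite set of points contained in the closed ball of radius R centered at c such that any two distinct points of s are at distance at least 2r from each other. Then the balls of radius r centered at the points of s are pairwise disjoint and contained in the ball of radius R + r centered at c, and consequently the cardinality of s satisfies (s.card : ℝ) ≤ (cosh(R + r) − 1)/(cosh r − 1). (This is the packing argument at the heart of the paper's Lemma 5, in the hyperbolic plane: at most ⌊vol(B(R+r))/vol(B(r))⌋ mutually disjoint r-balls fit in an (R+r)-ball.) -/

import Mathlib

open scoped UpperHalfPlane
open Real Set MeasureTheory
open scoped ENNReal


noncomputable def Hanti (b ρ k : ℝ) (y : ℝ) : ℝ :=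
  2 * (-(arcsin ((y - b) / ρ)) +
    (2 * b / k) * arctan ((b * (y - b) / (ρ + √(ρ ^ 2 - (y - b) ^ 2)) + ρ) / k) -
    √(ρ ^ 2 - (y - b) ^ 2) / y)

lemma Hanti_deriv (b ρ k : ℝ) (hk : 0 < k) (hρ : 0 < ρ) (hb : 0 < b)
    (hb2 : b ^ 2 = k ^ 2 + ρ ^ 2) {y : ℝ} (hy : y ∈ Ioo (b - ρ) (b + ρ)) :
    HasDerivAt (Hanti b ρ k) ((y ^ 2)⁻¹ * (2 * √(ρ ^ 2 - (y - b) ^ 2))) y := by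
  obtain ⟨hy1, hy2⟩ := hy
  have hbρ : ρ < b := by nlinarith
  have hy0 : 0 < y := by linarith
  set g : ℝ := √(ρ ^ 2 - (y - b) ^ 2) with hgdef
  have hd : 0 < ρ ^ 2 - (y - b) ^ 2 := by nlinarith
  have hgpos : 0 < g := Real.sqrt_pos.2 hd
  have hg : g ^ 2 = ρ ^ 2 - (y - b) ^ 2 := Real.sq_sqrt hd.le
  -- derivative of sqrt term
  have hsq : HasDerivAt (fun y : ℝ => √(ρ ^ 2 - (y - b) ^ 2)) (-(y - b) / g) y := by
    have h1 : HasDerivAt (fun y : ℝ => ρ ^ 2 - (y - b) ^ 2) (-(2 * (y - b))) y := by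
      have := ((hasDerivAt_id y).sub_const b).pow 2
      exact ((hasDerivAt_const y (ρ ^ 2)).sub this).congr_deriv (by simp)
    have h2 := (Real.hasDerivAt_sqrt hd.ne').comp y h1
    refine h2.congr_deriv ?_
    symm
    field_simp
    ring
  -- derivative of arcsin term
  have harc : HasDerivAt (fun y : ℝ => arcsin ((y - b) / ρ)) (1 / g) y := by
    have hs : HasDerivAt (fun y : ℝ => (y - b) / ρ) (1 / ρ) y := by
      simpa using ((hasDerivAt_id y).sub_const b).div_const ρ
    have h1 : (y - b) / ρ ≠ -1 := by
      intro h
      have : y - b = -ρ := by field_simp at h; linarith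
      linarith
    have h2 : (y - b) / ρ ≠ 1 := by
      intro h
      have : y - b = ρ := by field_simp at h; linarith [h]
      linarith
    have h3 := (Real.hasDerivAt_arcsin h1 h2).comp y hs
    refine h3.congr_deriv ?_
    symm
    have : 1 - ((y - b) / ρ) ^ 2 = (ρ ^ 2 - (y - b) ^ 2) / ρ ^ 2 := by
      field_simp
    rw [this, Real.sqrt_div hd.le, Real.sqrt_sq hρ.le]
    rw [← hgdef]
    field_simp
  -- derivative of arctan term
  have harctan : HasDerivAt
      (fun y : ℝ => arctan ((b * (y - b) / (ρ + √(ρ ^ 2 - (y - b) ^ 2)) + ρ) / k))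
      (k / (2 * g * y)) y := by
    have hden : ρ + g ≠ 0 := by positivity
    have hnum : HasDerivAt (fun y : ℝ => b * (y - b)) b y := by
      simpa using ((hasDerivAt_id y).sub_const b).const_mul b
    have hdd : HasDerivAt (fun y : ℝ => ρ + √(ρ ^ 2 - (y - b) ^ 2)) (-(y - b) / g) y := by
      exact ((hasDerivAt_const y ρ).add hsq).congr_deriv (by simp)
    have hv : HasDerivAt
        (fun y : ℝ => (b * (y - b) / (ρ + √(ρ ^ 2 - (y - b) ^ 2)) + ρ) / k)
        (((b * (ρ + g) - b * (y - b) * (-(y - b) / g)) / (ρ + g) ^ 2) / k) y := by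
      exact (((hnum.div hdd hden).add_const ρ).div_const k)
    have h3 := (Real.hasDerivAt_arctan _).comp y hv
    refine h3.congr_deriv ?_
    symm
    set v : ℝ := (b * (y - b) / (ρ + g) + ρ) / k with hvdef
    have hvsq : 1 + v ^ 2 = 2 * b * ρ * y / ((ρ + g) * k ^ 2) := by
      rw [hvdef]
      field_simp
      linear_combination (-((ρ+g)^2)) * hb2 + (b^2) * hg
    rw [hvsq]
    field_simp
    linear_combination (-1) * hg
  -- quotient term
  have hquot : HasDerivAt (fun y : ℝ => √(ρ ^ 2 - (y - b) ^ 2) / y)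
      ((-(y - b) / g * y - g * 1) / y ^ 2) y := hsq.div (hasDerivAt_id y) hy0.ne'
  have htot := ((harc.neg.add (harctan.const_mul (2 * b / k))).sub hquot).const_mul 2
  refine htot.congr_deriv ?_
  symm
  field_simp
  ring

lemma integral_f (b ρ k : ℝ) (hk : 0 < k) (hρ : 0 < ρ) (hb : 0 < b)
    (hb2 : b ^ 2 = k ^ 2 + ρ ^ 2) :
    ∫ y in (b - ρ)..(b + ρ), (y ^ 2)⁻¹ * (2 * √(ρ ^ 2 - (y - b) ^ 2))
      = 2 * π * (b - k) / k := by
  have hbρ : ρ < b := by nlinarith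
  have hA : 0 < b - ρ := by linarith
  have hAB : b - ρ ≤ b + ρ := by linarith
  have hgcont : Continuous fun y : ℝ => √(ρ ^ 2 - (y - b) ^ 2) := by
    continuity
  have hgden : ∀ y : ℝ, ρ + √(ρ ^ 2 - (y - b) ^ 2) ≠ 0 := fun y => by positivity
  have hcontH : ContinuousOn (Hanti b ρ k) (Icc (b - ρ) (b + ρ)) := by
    apply ContinuousOn.mul continuousOn_const
    apply ContinuousOn.sub
    · apply ContinuousOn.add
      · exact ((Real.continuous_arcsin.comp (by continuity)).continuousOn).neg
      · apply ContinuousOn.mul continuousOn_const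
        apply Continuous.continuousOn
        apply Real.continuous_arctan.comp
        apply Continuous.div_const
        apply Continuous.add _ continuous_const
        exact Continuous.div (by continuity) (by continuity) hgden
    · exact ContinuousOn.div hgcont.continuousOn continuousOn_id
        (fun y hy => ne_of_gt (lt_of_lt_of_le hA hy.1))
  have hcontf : ContinuousOn (fun y : ℝ => (y ^ 2)⁻¹ * (2 * √(ρ ^ 2 - (y - b) ^ 2)))
      (Icc (b - ρ) (b + ρ)) := by
    apply ContinuousOn.mul
    · exact ContinuousOn.inv₀ (by fun_prop)
        (fun y hy => pow_ne_zero 2 (ne_of_gt (lt_of_lt_of_le hA hy.1)))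
    · exact (continuous_const.mul hgcont).continuousOn
  have hint : IntervalIntegrable (fun y : ℝ => (y ^ 2)⁻¹ * (2 * √(ρ ^ 2 - (y - b) ^ 2)))
      MeasureTheory.volume (b - ρ) (b + ρ) := by
    apply ContinuousOn.intervalIntegrable
    rwa [uIcc_of_le hAB]
  have := intervalIntegral.integral_eq_sub_of_hasDeriv_right_of_le hAB hcontH
    (fun y hy => (Hanti_deriv b ρ k hk hρ hb hb2 hy).hasDerivWithinAt) hint
  rw [this]
  -- evaluate endpoints
  have e1 : √(ρ ^ 2 - (b + ρ - b) ^ 2) = 0 := by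
    rw [show ρ ^ 2 - (b + ρ - b) ^ 2 = 0 by ring, Real.sqrt_zero]
  have e2 : √(ρ ^ 2 - (b - ρ - b) ^ 2) = 0 := by
    rw [show ρ ^ 2 - (b - ρ - b) ^ 2 = 0 by ring, Real.sqrt_zero]
  have hHB : Hanti b ρ k (b + ρ) = 2 * (-(π / 2) + (2 * b / k) * arctan ((b + ρ) / k)) := by
    rw [Hanti, e1]
    rw [show b + ρ - b = ρ by ring, div_self hρ.ne', Real.arcsin_one]
    rw [show b * ρ / (ρ + 0) + ρ = b + ρ by field_simp; ring]
    ring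
  have hHA : Hanti b ρ k (b - ρ) = 2 * (π / 2 + (2 * b / k) * arctan ((ρ - b) / k)) := by
    rw [Hanti, e2]
    rw [show b - ρ - b = -ρ by ring, show -ρ / ρ = -1 by field_simp, Real.arcsin_neg_one]
    rw [show b * -ρ / (ρ + 0) + ρ = ρ - b by field_simp; ring]
    ring
  have harcsum : arctan ((b - ρ) / k) = π / 2 - arctan ((b + ρ) / k) := by
    have hpos : 0 < (b + ρ) / k := by positivity
    have hinv : ((b + ρ) / k)⁻¹ = (b - ρ) / k := by
      rw [inv_div]
      rw [div_eq_div_iff (by positivity) hk.ne']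
      nlinarith
    rw [← hinv, Real.arctan_inv_of_pos hpos]
  have : arctan ((ρ - b) / k) = -(π / 2 - arctan ((b + ρ) / k)) := by
    rw [show (ρ - b) / k = -((b - ρ) / k) by ring, Real.arctan_neg, harcsum]
  rw [hHB, hHA, this]
  field_simp
  ring

noncomputable def hypMeas : Measure (ℝ × ℝ) :=
  volume.withDensity fun p => ENNReal.ofReal (p.2 ^ 2)⁻¹

def Eset (a b ρ : ℝ) : Set (ℝ × ℝ) := {p | (p.1 - a) ^ 2 + (p.2 - b) ^ 2 < ρ ^ 2}

lemma Eset_open (a b ρ : ℝ) : IsOpen (Eset a b ρ) := by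
  apply isOpen_lt (by fun_prop) continuous_const

lemma hypMeas_Eset (a b ρ k : ℝ) (hk : 0 < k) (hρ : 0 < ρ) (hb : 0 < b)
    (hb2 : b ^ 2 = k ^ 2 + ρ ^ 2) :
    hypMeas (Eset a b ρ) = ENNReal.ofReal (2 * π * (b - k) / k) := by
  have hbρ : ρ < b := by nlinarith
  have hS : MeasurableSet (Eset a b ρ) := (Eset_open a b ρ).measurableSet
  set f : ℝ → ℝ := fun y => (y ^ 2)⁻¹ * (2 * √(ρ ^ 2 - (y - b) ^ 2)) with hf
  rw [hypMeas, withDensity_apply _ hS]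
  have hmw : Measurable fun p : ℝ × ℝ => ENNReal.ofReal (p.2 ^ 2)⁻¹ := by
    exact ((measurable_snd.pow_const 2).inv).ennreal_ofReal
  rw [← lintegral_indicator hS]
  rw [Measure.volume_eq_prod]
  rw [lintegral_prod_symm _ ((hmw.indicator hS).aemeasurable)]
  have inner : ∀ y : ℝ, (∫⁻ x, (Eset a b ρ).indicator
        (fun p : ℝ × ℝ => ENNReal.ofReal (p.2 ^ 2)⁻¹) (x, y))
      = ENNReal.ofReal (f y) := by
    intro y
    have hset : (fun x : ℝ => (Eset a b ρ).indicator
        (fun p : ℝ × ℝ => ENNReal.ofReal (p.2 ^ 2)⁻¹) (x, y))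
        = (Ioo (a - √(ρ ^ 2 - (y - b) ^ 2)) (a + √(ρ ^ 2 - (y - b) ^ 2))).indicator
          (fun _ => ENNReal.ofReal (y ^ 2)⁻¹) := by
      funext x
      have hmem : (x, y) ∈ Eset a b ρ ↔
          x ∈ Ioo (a - √(ρ ^ 2 - (y - b) ^ 2)) (a + √(ρ ^ 2 - (y - b) ^ 2)) := by
        simp only [Eset, mem_setOf_eq, mem_Ioo]
        constructor
        · intro h
          have h2 : |x - a| < √(ρ ^ 2 - (y - b) ^ 2) := by
            rw [← Real.sqrt_sq_eq_abs]
            exact Real.sqrt_lt_sqrt (sq_nonneg _) (by nlinarith)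
          rw [abs_lt] at h2
          exact ⟨by linarith [h2.1], by linarith [h2.2]⟩
        · rintro ⟨h1, h2⟩
          have h3 : |x - a| < √(ρ ^ 2 - (y - b) ^ 2) := abs_lt.2 ⟨by linarith, by linarith⟩
          have hdpos : 0 < √(ρ ^ 2 - (y - b) ^ 2) := lt_of_le_of_lt (abs_nonneg _) h3
          have hd : 0 < ρ ^ 2 - (y - b) ^ 2 := Real.sqrt_pos.1 hdpos
          have hsq : √(ρ ^ 2 - (y - b) ^ 2) ^ 2 = ρ ^ 2 - (y - b) ^ 2 := Real.sq_sqrt hd.le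
          nlinarith [sq_abs (x - a), abs_nonneg (x - a)]
      by_cases h : (x, y) ∈ Eset a b ρ
      · rw [indicator_of_mem h, indicator_of_mem (hmem.1 h)]
      · rw [indicator_of_notMem h, indicator_of_notMem (fun hc => h (hmem.2 hc))]
    rw [hset, lintegral_indicator measurableSet_Ioo, setLIntegral_const, Real.volume_Ioo]
    rw [show a + √(ρ ^ 2 - (y - b) ^ 2) - (a - √(ρ ^ 2 - (y - b) ^ 2))
        = 2 * √(ρ ^ 2 - (y - b) ^ 2) by ring]
    rw [← ENNReal.ofReal_mul (by positivity)]
  simp only [inner]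
  -- restrict to Icc
  have hsupp : (fun y => ENNReal.ofReal (f y))
      = (Icc (b - ρ) (b + ρ)).indicator fun y => ENNReal.ofReal (f y) := by
    funext y
    by_cases h : y ∈ Icc (b - ρ) (b + ρ)
    · rw [indicator_of_mem h]
    · rw [indicator_of_notMem h]
      have : ρ ^ 2 - (y - b) ^ 2 ≤ 0 := by
        simp only [mem_Icc, not_and_or, not_le] at h
        rcases h with h | h <;> nlinarith
      rw [hf]
      simp [Real.sqrt_eq_zero_of_nonpos this]
  rw [hsupp, lintegral_indicator measurableSet_Icc]
  have hA : 0 < b - ρ := by linarith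
  have hfint : IntegrableOn f (Icc (b - ρ) (b + ρ)) := by
    apply ContinuousOn.integrableOn_compact isCompact_Icc
    apply ContinuousOn.mul
    · exact ContinuousOn.inv₀ (by fun_prop)
        (fun y hy => pow_ne_zero 2 (ne_of_gt (lt_of_lt_of_le hA hy.1)))
    · exact (continuous_const.mul (by continuity)).continuousOn
  rw [← MeasureTheory.ofReal_integral_eq_lintegral_ofReal hfint
    (Filter.Eventually.of_forall fun y => by positivity)]
  rw [MeasureTheory.integral_Icc_eq_integral_Ioc,
    ← intervalIntegral.integral_of_le (by linarith)]
  rw [integral_f b ρ k hk hρ hb hb2]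

noncomputable def Eball (z : ℍ) (t : ℝ) : Set (ℝ × ℝ) :=
  Eset z.re (z.im * Real.cosh t) (z.im * Real.sinh t)

lemma mem_Eball {x z : ℍ} {t : ℝ} (ht : 0 < t) :
    ((x : ℂ).re, (x : ℂ).im) ∈ Eball z t ↔ x ∈ Metric.ball z t := by
  have hρ : 0 < z.im * Real.sinh t :=
    mul_pos z.im_pos (Real.sinh_pos_iff.2 ht)
  rw [Metric.mem_ball, UpperHalfPlane.dist_lt_iff_dist_coe_center_lt, Complex.dist_eq_re_im]
  rw [show ((z.center t : ℍ) : ℂ).re = z.re from rfl,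
    show ((z.center t : ℍ) : ℂ).im = z.im * Real.cosh t from rfl]
  rw [Real.sqrt_lt' hρ]
  simp only [Eball, Eset, mem_setOf_eq]

lemma Eball_pos {z : ℍ} {t : ℝ} (ht : 0 < t) {p : ℝ × ℝ} (hp : p ∈ Eball z t) :
    0 < p.2 := by
  simp only [Eball, Eset, mem_setOf_eq] at hp
  have h1 : (p.2 - z.im * Real.cosh t) ^ 2 < (z.im * Real.sinh t) ^ 2 := by
    nlinarith [sq_nonneg (p.1 - z.re)]
  have h2 : z.im * Real.sinh t < z.im * Real.cosh t :=
    mul_lt_mul_of_pos_left (Real.sinh_lt_cosh t) z.im_pos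
  nlinarith [z.im_pos, mul_pos z.im_pos (Real.sinh_pos_iff.2 ht)]

/-- Hyperbolic packing: if a finite set `s` of points of the hyperbolic plane is contained
in the closed ball of radius `R` about `c` and any two distinct points of `s` are at
distance at least `2r`, then the `r`-balls about the points of `s` are pairwise disjoint
and contained in the ball of radius `R + r` about `c`, and hence
`s.card ≤ (cosh(R+r) − 1)/(cosh r − 1)` (the ratio of hyperbolic areas of the balls). -/
theorem hyperbolic_ball_packing (r R : ℝ) (hr : 0 < r) (hR : 0 < R) (c : ℍ)
    (s : Finset ℍ) (hball : ∀ p ∈ s, p ∈ Metric.closedBall c R)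
    (hsep : ∀ p ∈ s, ∀ q ∈ s, p ≠ q → 2 * r ≤ dist p q) :
    (∀ p ∈ s, ∀ q ∈ s, p ≠ q → Disjoint (Metric.ball p r) (Metric.ball q r)) ∧
    (∀ p ∈ s, Metric.ball p r ⊆ Metric.ball c (R + r)) ∧
    (s.card : ℝ) ≤ (Real.cosh (R + r) - 1) / (Real.cosh r - 1) := by
  have hdis : ∀ p ∈ s, ∀ q ∈ s, p ≠ q → Disjoint (Metric.ball p r) (Metric.ball q r) := by
    intro p hp q hq hpq
    rw [Set.disjoint_left]
    intro x hxp hxq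
    have hs2 := hsep p hp q hq hpq
    have h1 : dist p q ≤ dist p x + dist x q := dist_triangle _ _ _
    rw [Metric.mem_ball] at hxp hxq
    rw [dist_comm p x] at h1
    linarith
  have hsub : ∀ p ∈ s, Metric.ball p r ⊆ Metric.ball c (R + r) := by
    intro p hp x hx
    rw [Metric.mem_ball] at hx ⊢
    have h2 := hball p hp
    rw [Metric.mem_closedBall] at h2
    calc dist x c ≤ dist x p + dist p c := dist_triangle _ _ _
    _ < r + R := by linarith
    _ = R + r := by ring
  refine ⟨hdis, hsub, ?_⟩
  have hRr : 0 < R + r := by linarith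
  have hEmeas : ∀ (z : ℍ) (t : ℝ), 0 < t →
      hypMeas (Eball z t) = ENNReal.ofReal (2 * π * (Real.cosh t - 1)) := by
    intro z t ht
    have h := hypMeas_Eset z.re (z.im * Real.cosh t) (z.im * Real.sinh t) z.im
      z.im_pos (mul_pos z.im_pos (Real.sinh_pos_iff.2 ht))
      (mul_pos z.im_pos (Real.cosh_pos t))
      (by linear_combination (z.im ^ 2) * Real.cosh_sq t)
    rw [Eball, h]
    congr 1
    have him := z.im_pos.ne'
    field_simp
  have hEsub : ∀ p ∈ s, Eball p r ⊆ Eball c (R + r) := by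
    intro p hp q hq
    have hq2 : 0 < q.2 := Eball_pos hr hq
    set x : ℍ := ⟨⟨q.1, q.2⟩, hq2⟩ with hxdef
    have hxq : ((x : ℂ).re, (x : ℂ).im) = q := rfl
    have h1 : x ∈ Metric.ball p r := (mem_Eball hr).1 (by rw [hxq]; exact hq)
    have h2 := (mem_Eball hRr).2 (hsub p hp h1)
    rwa [hxq] at h2
  have hEdisj : (↑s : Set ℍ).PairwiseDisjoint fun p => Eball p r := by
    intro p hp q hq hpq
    rw [Function.onFun, Set.disjoint_left]
    intro a hap haq
    have ha2 : 0 < a.2 := Eball_pos hr hap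
    set x : ℍ := ⟨⟨a.1, a.2⟩, ha2⟩ with hxdef
    have hxa : ((x : ℂ).re, (x : ℂ).im) = a := rfl
    have h1 : x ∈ Metric.ball p r := (mem_Eball hr).1 (by rw [hxa]; exact hap)
    have h2 : x ∈ Metric.ball q r := (mem_Eball hr).1 (by rw [hxa]; exact haq)
    exact Set.disjoint_left.1 (hdis p (by exact_mod_cast hp) q (by exact_mod_cast hq) hpq) h1 h2
  have hsum : hypMeas (⋃ p ∈ s, Eball p r) = ∑ p ∈ s, hypMeas (Eball p r) :=
    measure_biUnion_finset hEdisj fun p _ => (Eset_open _ _ _).measurableSet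
  have hle : (s.card : ℝ≥0∞) * ENNReal.ofReal (2 * π * (Real.cosh r - 1))
      ≤ ENNReal.ofReal (2 * π * (Real.cosh (R + r) - 1)) := by
    calc (s.card : ℝ≥0∞) * ENNReal.ofReal (2 * π * (Real.cosh r - 1))
        = ∑ p ∈ s, hypMeas (Eball p r) := by
          rw [Finset.sum_congr rfl (fun p _ => hEmeas p r hr), Finset.sum_const,
            nsmul_eq_mul]
    _ = hypMeas (⋃ p ∈ s, Eball p r) := hsum.symm
    _ ≤ hypMeas (Eball c (R + r)) := measure_mono (Set.iUnion₂_subset hEsub)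
    _ = _ := hEmeas c (R + r) hRr
  have hcr : 0 < Real.cosh r - 1 := by
    have := Real.one_lt_cosh.2 hr.ne'
    linarith
  have hcRr : 0 < Real.cosh (R + r) - 1 := by
    have := Real.one_lt_cosh.2 hRr.ne'
    linarith
  have hπ := Real.pi_pos
  rw [← ENNReal.ofReal_natCast, ← ENNReal.ofReal_mul (Nat.cast_nonneg _)] at hle
  have hreal : (s.card : ℝ) * (2 * π * (Real.cosh r - 1))
      ≤ 2 * π * (Real.cosh (R + r) - 1) :=
    (ENNReal.ofReal_le_ofReal_iff (by positivity)).1 hle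
  rw [le_div_iff₀ hcr]
  nlinarith
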